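/- Let k be an infinite field and R a standard graded Cohen–Macaulay k-algebra of dimension 1. Let H be a homogeneous R-ideal such that H_𝔭 = 0 for every minimal prime 𝔭 of H. Then there exists a homogeneous element of degree a(R) + 1 in 0 : H that is not contained in any minimal prime of H. -/

import Mathlib

/-- A vector space over an infinite field is not a finite union of subspaces none of which
contains a given subspace `V`. -/
theorem avoid_subspaces {k M : Type*} [Field k] [Infinite k] [AddCommGroup M] [Module k M]
    (V : Submodule k M) (s : Finset (Submodule k M)) (h : ∀ W ∈ s, ¬ V ≤ W) :
    ∃ x ∈ V, ∀ W ∈ s, x ∉ W := by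
  classical
  induction s using Finset.induction_on with
  | empty => exact ⟨0, V.zero_mem, by simp⟩
  | @insert W s hWs ih =>
    obtain ⟨x, hxV, hx⟩ := ih (fun U hU => h U (Finset.mem_insert_of_mem hU))
    by_cases hxW : x ∉ W
    · exact ⟨x, hxV, fun U hU =>
        (Finset.mem_insert.mp hU).elim (fun e => e ▸ hxW) (fun hU' => hx U hU')⟩
    push_neg at hxW
    obtain ⟨z, hzV, hzW⟩ := SetLike.not_le_iff_exists.mp (h W (Finset.mem_insert_self W s))
    have hbad : ∀ U ∈ insert W s, {c : k | x + c • z ∈ U}.Subsingleton := by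
      intro U hU c hc c' hc'
      simp only [Set.mem_setOf_eq] at hc hc'
      by_contra hne
      have hsub : (c - c') • z ∈ U := by
        have := U.sub_mem hc hc'
        simpa [sub_smul] using this
      have hzU : z ∈ U := by
        have := U.smul_mem (c - c')⁻¹ hsub
        rwa [smul_smul, inv_mul_cancel₀ (sub_ne_zero.mpr hne), one_smul] at this
      rcases Finset.mem_insert.mp hU with rfl | hU'
      · exact hzW hzU
      · have hxU : x ∈ U := by
          have := U.sub_mem hc (U.smul_mem c hzU)
          simpa using this
        exact hx U hU' hxU
    have hfin : (⋃ U ∈ (insert W s : Finset (Submodule k M)), {c : k | x + c • z ∈ U}).Finite :=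
      Set.Finite.biUnion (Finset.finite_toSet _) (fun U hU => (hbad U hU).finite)
    obtain ⟨c, hc⟩ := hfin.infinite_compl.nonempty
    refine ⟨x + c • z, V.add_mem hxV (V.smul_mem c hzV), fun U hU hcU => hc ?_⟩
    exact Set.mem_biUnion hU hcU


/-- Integer power of an ideal; by convention nonpositive exponents give the unit ideal. -/
def ipow {R : Type*} [CommRing R] (I : Ideal R) (n : ℤ) : Ideal R := I ^ n.toNat

/-- **Proposition 3.5**: Let `k` be an infinite field and `R` a standard graded
Cohen–Macaulay `k`-algebra of dimension `1`.  Let `H` be a homogeneous `R`-ideal such that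
`H_𝔭 = 0` for every minimal prime `𝔭` of `H`.  Then there exists a homogeneous element of
degree `a(R) + 1` in `0 : H` that is not contained in any minimal prime of `H`. -/
theorem statement_15
    {k R : Type*} [Field k] [Infinite k] [CommRing R] [Algebra k R] [IsNoetherianRing R]
    -- `R` is standard graded over `k`:
    (𝒜 : ℤ → Submodule k R) [GradedAlgebra 𝒜]
    (hneg : ∀ i : ℤ, i < 0 → 𝒜 i = ⊥)
    (hstd : ∀ i : ℤ, 0 ≤ i → 𝒜 (i + 1) = 𝒜 1 * 𝒜 i)
    -- of dimension one:
    (hdim : ringKrullDim R = 1)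
    -- `𝔪` is the homogeneous maximal ideal:
    (𝔪 : Ideal R) (h𝔪 : 𝔪 = Ideal.span (𝒜 1 : Set R))
    -- `y` is a linear nonzerodivisor parameter (this encodes that `R` is Cohen–Macaulay):
    (y : R) (hy1 : y ∈ 𝒜 1) (hynzd : y ∈ nonZeroDivisors R)
    (hsop : 𝔪 ≤ (Ideal.span {y}).radical)
    -- `a` is the `a`-invariant of `R`, characterized by the reduction number `r_(y)(𝔪) = a + 1`:
    (a : ℤ) (ha : 0 ≤ a + 1)
    (hred : ∀ n : ℤ, a + 1 ≤ n → ipow 𝔪 (n + 1) = Ideal.span {y} * ipow 𝔪 n)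
    (hmin : ¬ ipow 𝔪 (a + 1) = Ideal.span {y} * ipow 𝔪 a)
    -- `H` is a homogeneous ideal that vanishes locally at each of its minimal primes:
    (H : Ideal R) (hH : Ideal.IsHomogeneous 𝒜 H)
    (hloc : ∀ p ∈ H.minimalPrimes, ∀ h ∈ H, ∃ s ∉ p, s * h = 0) :
    ∃ x ∈ 𝒜 (a + 1), x ∈ Submodule.colon (⊥ : Ideal R) H ∧
      ∀ p ∈ H.minimalPrimes, x ∉ p := by
  classical
  -- colon membership
  have hcolon : ∀ x : R, x ∈ Submodule.colon (⊥ : Ideal R) H ↔ ∀ h ∈ H, x * h = 0 := by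
    intro x
    rw [Submodule.mem_colon]
    constructor
    · intro hx h hh
      have := hx h hh
      simpa [smul_eq_mul] using this
    · intro hx h hh
      simp only [smul_eq_mul, Ideal.mem_bot]
      exact hx h hh
  -- Step 1: `y` avoids every minimal prime of `H`.
  have hkey : ∀ p ∈ H.minimalPrimes, y ∉ p := by
    intro p hp hyp
    have hprime : p.IsPrime := hp.1.1
    have hminR : p ∈ minimalPrimes R := by
      constructor
      · exact ⟨hprime, bot_le⟩
      · intro q hq hqp
        have hHq : H ≤ q := by
          intro h hh
          obtain ⟨s, hs, hsh⟩ := hloc p hp h hh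
          have hmem : s * h ∈ q := by rw [hsh]; exact q.zero_mem
          rcases hq.1.mem_or_mem hmem with h1 | h1
          · exact absurd (hqp h1) hs
          · exact h1
        exact hp.2 ⟨hq.1, hHq⟩ hqp
    have hnil : IsNilpotent (algebraMap R (Localization p.primeCompl) y) := by
      haveI := Ring.KrullDimLE.of_isLocalization p hminR (Localization p.primeCompl)
      exact Ring.KrullDimLE.isNilpotent_iff_mem_maximalIdeal.mpr
        ((IsLocalization.AtPrime.to_map_mem_maximal_iff _ p y).mpr hyp)
    obtain ⟨n, hn⟩ := hnil
    rw [← map_pow] at hn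
    obtain ⟨m, hm⟩ := (IsLocalization.map_eq_zero_iff p.primeCompl _ _).mp hn
    have hm0 : (m : R) = 0 :=
      (mem_nonZeroDivisors_iff.mp (pow_mem hynzd n)).2 _ hm
    exact m.2 (hm0 ▸ p.zero_mem)
  -- Step 2: `𝒜 n ⊆ 𝔪 ^ n` for `n ≥ 1`.
  have hApow : ∀ n : ℕ, 1 ≤ n → (𝒜 (n : ℤ)) ≤ Submodule.restrictScalars k (𝔪 ^ n) := by
    intro n
    induction n with
    | zero => omega
    | succ n ih =>
      intro _
      by_cases hn : n = 0
      · subst hn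
        intro x hx
        have hxm : x ∈ 𝔪 := by rw [h𝔪]; exact Ideal.subset_span (by simpa using hx)
        simpa [Submodule.restrictScalars_mem] using hxm
      · have h1 : 1 ≤ n := Nat.one_le_iff_ne_zero.mpr hn
        have hstd' := hstd n (by positivity)
        rw [show ((n + 1 : ℕ) : ℤ) = (n : ℤ) + 1 by push_cast; ring, hstd']
        refine Submodule.mul_le.mpr ?_
        intro r hr b hb
        have hbm : b ∈ 𝔪 ^ n := ih h1 hb
        have hrm : r ∈ 𝔪 := by rw [h𝔪]; exact Ideal.subset_span hr
        have := Ideal.mul_mem_mul hrm hbm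
        show r * b ∈ 𝔪 ^ (n + 1)
        rw [pow_succ']; exact this
  -- Step 3: reduction of degree
  have hreduce : ∀ (m : ℕ) (z : R), z ∈ 𝒜 (a + 1 + m) → (∀ h ∈ H, z * h = 0) →
      ∀ p ∈ H.minimalPrimes, z ∉ p →
      ∃ x ∈ 𝒜 (a + 1), (∀ h ∈ H, x * h = 0) ∧ x ∉ p := by
    intro m
    induction m with
    | zero =>
      intro z hz hzH p hp hzp
      exact ⟨z, by simpa using hz, hzH, hzp⟩
    | succ m ih =>
      intro z hz hzH p hp hzp
      set d : ℤ := a + 1 + (m + 1 : ℕ) with hd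
      have hd1 : 1 ≤ d := by omega
      have hzd : z ∈ 𝒜 d := hz
      have hz2 : z ∈ 𝒜 ((d.toNat : ℤ)) := by
        rwa [Int.toNat_of_nonneg (by omega)]
      have hz' : z ∈ 𝔪 ^ d.toNat := hApow d.toNat (by omega) hz2
      have hrn := hred (d - 1) (by omega)
      rw [show d - 1 + 1 = d by ring] at hrn
      unfold ipow at hrn
      have hzspan : z ∈ Ideal.span {y} * 𝔪 ^ (d - 1).toNat := by
        rw [← hrn]; exact hz'
      obtain ⟨w, hw, hyw⟩ := Ideal.mem_span_singleton_mul.mp hzspan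
      set w' : R := (DirectSum.decompose 𝒜 w (d - 1) : R) with hw'
      have hzw' : z = y * w' := by
        have h1 : (DirectSum.decompose 𝒜 (y * w) (1 + (d - 1)) : R)
            = y * (DirectSum.decompose 𝒜 w (d - 1) : R) :=
          DirectSum.coe_decompose_mul_add_of_left_mem 𝒜 hy1
        rw [hyw, show (1 : ℤ) + (d - 1) = d by ring,
          DirectSum.decompose_of_mem_same 𝒜 hzd] at h1
        exact h1
      have hw'A : w' ∈ 𝒜 (d - 1) := SetLike.coe_mem _
      have hw'H : ∀ h ∈ H, w' * h = 0 := by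
        intro h hh
        have h3 : (w' * h) * y = 0 := by
          have : y * (w' * h) = z * h := by rw [hzw']; ring
          rw [mul_comm, this, hzH h hh]
        exact (mem_nonZeroDivisors_iff.mp hynzd).2 _ h3
      have hw'p : w' ∉ p := fun hc => hzp (hzw' ▸ Ideal.mul_mem_left p y hc)
      have hw'A' : w' ∈ 𝒜 (a + 1 + (m : ℕ)) := by
        rwa [show (a + 1 + (m : ℕ) : ℤ) = d - 1 by push_cast [hd]; ring]
      exact ih w' hw'A' hw'H p hp hw'p
  -- Step 4: per-prime existence
  have hper : ∀ p ∈ H.minimalPrimes,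
      ∃ x ∈ 𝒜 (a + 1), (∀ h ∈ H, x * h = 0) ∧ x ∉ p := by
    intro p hp
    have hprime : p.IsPrime := hp.1.1
    obtain ⟨T, hT⟩ := IsNoetherian.noetherian H
    have hTH : ∀ h ∈ T, h ∈ H := fun h hh => hT ▸ Submodule.subset_span hh
    choose sfun hs1 hs2 using fun (h : R) (hh : h ∈ H) => hloc p hp h hh
    set s : R := ∏ h ∈ T.attach, sfun h.1 (hTH h.1 h.2) with hsdef
    have hsp : s ∉ p := by
      intro hc
      obtain ⟨i, _, hfac⟩ := (Ideal.IsPrime.prod_mem_iff (hp := hprime)).mp hc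
      exact hs1 _ _ hfac
    have hsH : ∀ h ∈ H, s * h = 0 := by
      intro h hh
      have hle : H ≤ LinearMap.ker (LinearMap.mul R R s) := by
        rw [← hT]
        rw [Submodule.span_le]
        intro t ht
        simp only [SetLike.mem_coe, LinearMap.mem_ker, LinearMap.mul_apply_apply]
        have hmem : (⟨t, ht⟩ : {x // x ∈ T}) ∈ T.attach := Finset.mem_attach _ _
        rw [← Finset.mul_prod_erase T.attach _ hmem] at hsdef
        rw [hsdef, mul_assoc, mul_comm (∏ h ∈ T.attach.erase _, sfun h.1 (hTH h.1 h.2)) t,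
          ← mul_assoc, hs2 t (hTH t ht), zero_mul]
      have := hle hh
      simpa using this
    have hcomp : ∃ d : ℤ, (DirectSum.decompose 𝒜 s d : R) ∉ p := by
      by_contra hc
      push_neg at hc
      have hsum := DirectSum.sum_support_decompose 𝒜 s
      have : s ∈ p := by
        rw [← hsum]
        exact Ideal.sum_mem p (fun i _ => hc i)
      exact hsp this
    obtain ⟨d, hdp⟩ := hcomp
    set z : R := (DirectSum.decompose 𝒜 s d : R) with hzdef
    have hzA : z ∈ 𝒜 d := SetLike.coe_mem _
    have hd0 : 0 ≤ d := by
      by_contra hneg'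
      have hbot : 𝒜 d = ⊥ := hneg d (by omega)
      have : z = 0 := by rw [hbot] at hzA; simpa using hzA
      exact hdp (this ▸ p.zero_mem)
    have hzH : ∀ h ∈ H, z * h = 0 := by
      intro h hh
      have hsum := DirectSum.sum_support_decompose 𝒜 h
      have : z * h = ∑ j ∈ (DirectSum.decompose 𝒜 h).support,
          z * (DirectSum.decompose 𝒜 h j : R) := by
        rw [← Finset.mul_sum, hsum]
      rw [this]
      refine Finset.sum_eq_zero (fun j _ => ?_)
      have hhj : (DirectSum.decompose 𝒜 h j : R) ∈ H := hH j hh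
      have hzero : s * (DirectSum.decompose 𝒜 h j : R) = 0 := hsH _ hhj
      have h4 : (DirectSum.decompose 𝒜 (s * (DirectSum.decompose 𝒜 h j : R)) (d + j) : R)
          = (DirectSum.decompose 𝒜 s d : R) * (DirectSum.decompose 𝒜 h j : R) :=
        DirectSum.coe_decompose_mul_add_of_right_mem 𝒜 (SetLike.coe_mem _)
      rw [hzero] at h4
      simpa using h4.symm
    rcases le_or_gt d (a + 1) with hle | hlt
    · set m : ℕ := (a + 1 - d).toNat with hm
      have hym : y ^ m ∈ 𝒜 (m : ℤ) := by
        have := SetLike.pow_mem_graded m hy1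
        simpa using this
      refine ⟨y ^ m * z, ?_, ?_, ?_⟩
      · have := SetLike.mul_mem_graded hym hzA
        rwa [show (m : ℤ) + d = a + 1 by omega] at this
      · intro h hh
        rw [mul_assoc, hzH h hh, mul_zero]
      · intro hc
        rcases hprime.mem_or_mem hc with h1 | h1
        · exact hkey p hp (hprime.mem_of_pow_mem m h1)
        · exact hdp h1
    · have hzA' : z ∈ 𝒜 (a + 1 + ((d - (a + 1)).toNat : ℕ)) := by
        rwa [show (a + 1 + (((d - (a + 1)).toNat : ℕ) : ℤ) : ℤ) = d by omega]
      exact hreduce (d - (a + 1)).toNat z hzA' hzH p hp hdp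
  -- Step 5: combine via subspace avoidance
  have hfin : H.minimalPrimes.Finite := by
    rw [Ideal.minimalPrimes_eq_comap]
    exact (minimalPrimes.finite_of_isNoetherianRing _).image _
  set J : Ideal R := Submodule.colon (⊥ : Ideal R) H with hJ
  set V : Submodule k R := Submodule.restrictScalars k J ⊓ 𝒜 (a + 1) with hV
  set PS : Finset (Submodule k R) :=
    hfin.toFinset.image (fun p => Submodule.restrictScalars k p) with hPS
  have hVW : ∀ W ∈ PS, ¬ V ≤ W := by
    intro W hW
    simp only [hPS, Finset.mem_image, Set.Finite.mem_toFinset] at hW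
    obtain ⟨p, hp, rfl⟩ := hW
    obtain ⟨x, hxA, hxH, hxp⟩ := hper p hp
    intro hle'
    apply hxp
    have hxV : x ∈ V := by
      refine Submodule.mem_inf.mpr ⟨?_, hxA⟩
      simpa [Submodule.restrictScalars_mem, hJ] using (hcolon x).mpr hxH
    exact hle' hxV
  obtain ⟨x, hxV, hx⟩ := avoid_subspaces V PS hVW
  obtain ⟨hxJ, hxA⟩ := Submodule.mem_inf.mp hxV
  refine ⟨x, hxA, hxJ, ?_⟩
  intro p hp hxp
  exact hx (Submodule.restrictScalars k p)
    (Finset.mem_image_of_mem _ (hfin.mem_toFinset.mpr hp)) hxp
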